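/- Let T be a hyponormal bilateral weighted shift on H with nonzero weight sequence (β_n)_{n∈ℤ}, M = lim_{n→+∞} |β_n| and m = lim_{n→−∞} |β_n|. Then the spectrum of T (and of its adjoint T*) is exactly the closed annulus {λ ∈ ℂ : m ≤ |λ| ≤ M}. -/

import Mathlib

open scoped ComplexConjugate

namespace BWSaux

local notation "⟪" x ", " y "⟫" => @inner ℂ _ _ x y

variable {H : Type*} [NormedAddCommGroup H] [InnerProductSpace ℂ H] [CompleteSpace H]

lemma approx_mem_spectrum (A : H →L[ℂ] H) (mu : ℂ)
    (h : ∀ ε > 0, ∃ x : H, x ≠ 0 ∧ ‖A x - mu • x‖ ≤ ε * ‖x‖) : mu ∈ spectrum ℂ A := by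
  by_contra hns
  rw [spectrum.notMem_iff] at hns
  obtain ⟨u, hu⟩ := hns
  set S : H →L[ℂ] H := ↑u⁻¹ with hS
  obtain ⟨x, hx0, hx⟩ := h (1/(‖S‖+1)) (by positivity)
  have hSB : S * (algebraMap ℂ (H →L[ℂ] H) mu - A) = 1 := by
    rw [← hu]; exact u.inv_mul
  have hxx : S ((algebraMap ℂ (H →L[ℂ] H) mu - A) x) = x := by
    have := congrArg (fun (f : H →L[ℂ] H) => f x) hSB
    simpa [ContinuousLinearMap.mul_apply] using this
  have h1 : ‖x‖ ≤ ‖S‖ * ‖(algebraMap ℂ (H →L[ℂ] H) mu - A) x‖ := by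
    conv_lhs => rw [← hxx]
    exact S.le_opNorm _
  have h2 : ‖(algebraMap ℂ (H →L[ℂ] H) mu - A) x‖ = ‖A x - mu • x‖ := by
    rw [ContinuousLinearMap.sub_apply, Algebra.algebraMap_eq_smul_one,
      ContinuousLinearMap.smul_apply, ContinuousLinearMap.one_apply, ← norm_neg]
    congr 1; abel
  have hxpos : 0 < ‖x‖ := norm_pos_iff.mpr hx0
  have hSnn : 0 ≤ ‖S‖ := norm_nonneg _
  rw [h2] at h1
  have hle : ‖x‖ ≤ ‖S‖ * (1/(‖S‖+1) * ‖x‖) := h1.trans (by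
    apply mul_le_mul_of_nonneg_left hx hSnn)
  have key : ‖S‖ * (1 / (‖S‖ + 1) * ‖x‖) < ‖x‖ := by
    rw [show ‖S‖ * (1/(‖S‖+1) * ‖x‖) = ‖S‖*‖x‖/(‖S‖+1) by ring,
      div_lt_iff₀ (by positivity)]
    nlinarith
  linarith

lemma parseval (e : HilbertBasis ℤ ℂ H) (x : H) :
    HasSum (fun k : ℤ => ‖⟪e k, x⟫‖^2) (‖x‖^2) := by
  have h := (HilbertBasis.hasSum_inner_mul_inner e x x).mapL Complex.reCLM
  have h1 : ∀ k : ℤ, Complex.reCLM (⟪x, e k⟫ * ⟪e k, x⟫) = ‖⟪e k, x⟫‖^2 := by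
    intro k
    rw [← inner_conj_symm x (e k), RCLike.conj_mul]
    simp [← Complex.ofReal_pow]
  have h2 : Complex.reCLM ⟪x, x⟫ = ‖x‖^2 := by
    have := @inner_self_eq_norm_sq ℂ _ _ _ _ x
    simpa using this
  simpa [h1, h2, ← Complex.ofReal_pow] using h

lemma coefT (e : HilbertBasis ℤ ℂ H) (β : ℤ → ℂ) (T : H →L[ℂ] H)
    (hT : ∀ n : ℤ, T (e n) = β n • e (n + 1)) (x : H) (k : ℤ) :
    ⟪e k, T x⟫ = β (k-1) * ⟪e (k-1), x⟫ := by
  have h0 := (e.hasSum_repr x).mapL T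
  have h1 : ∀ i : ℤ, T (e.repr x i • e i) = e.repr x i • β i • e (i+1) := by
    intro i; rw [map_smul, hT]
  rw [show (fun i => T (e.repr x i • e i)) = fun i => e.repr x i • β i • e (i+1) from
    funext h1] at h0
  have h2 := h0.mapL (innerSL ℂ (e k))
  have h3 : ∀ i : ℤ, (innerSL ℂ (e k)) (e.repr x i • β i • e (i+1))
      = if i = k - 1 then β (k-1) * ⟪e (k-1), x⟫ else 0 := by
    intro i
    have hite : ⟪e k, e (i+1)⟫ = if k = i+1 then 1 else 0 :=
      orthonormal_iff_ite.mp e.orthonormal k (i+1)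
    simp only [innerSL_apply_apply, inner_smul_right, hite]
    by_cases hik : i = k - 1
    · subst hik
      rw [if_pos (by ring), if_pos rfl]
      rw [e.repr_apply_apply]
      ring
    · rw [if_neg (by omega), if_neg hik]
      ring
  rw [show (fun i => (innerSL ℂ (e k)) (e.repr x i • β i • e (i+1)))
      = fun i => if i = k - 1 then β (k-1) * ⟪e (k-1), x⟫ else 0 from funext h3] at h2
  have h4 : HasSum (fun i : ℤ => if i = k - 1 then β (k-1) * ⟪e (k-1), x⟫ else 0)
      (β (k-1) * ⟪e (k-1), x⟫) := hasSum_ite_eq (k-1) _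
  simpa using h2.unique h4

lemma coefTadj (e : HilbertBasis ℤ ℂ H) (β : ℤ → ℂ) (T : H →L[ℂ] H)
    (hT : ∀ n : ℤ, T (e n) = β n • e (n + 1)) (x : H) (k : ℤ) :
    ⟪e k, ContinuousLinearMap.adjoint T x⟫ = conj (β k) * ⟪e (k+1), x⟫ := by
  rw [ContinuousLinearMap.adjoint_inner_right, hT, inner_smul_left]

lemma normTx_ge (e : HilbertBasis ℤ ℂ H) (β : ℤ → ℂ) (T : H →L[ℂ] H)
    (hT : ∀ n : ℤ, T (e n) = β n • e (n + 1)) (m : ℝ) (hm0 : 0 ≤ m)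
    (hmβ : ∀ n, m ≤ ‖β n‖) (x : H) : m * ‖x‖ ≤ ‖T x‖ := by
  have hx := parseval e x
  have hTx := parseval e (T x)
  have hTx' : HasSum (fun k : ℤ => ‖β k * ⟪e k, x⟫‖^2) (‖T x‖^2) := by
    have h := (Equiv.addRight (1:ℤ)).hasSum_iff.mpr hTx
    rw [Equiv.coe_addRight] at h
    have hcomp : ((fun k : ℤ => ‖⟪e k, T x⟫‖^2) ∘ (fun k : ℤ => k + 1))
        = fun k : ℤ => ‖β k * ⟪e k, x⟫‖^2 := by
      funext k
      simp only [Function.comp_apply]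
      rw [coefT e β T hT x (k+1)]
      norm_num
    rwa [hcomp] at h
  have hmx : HasSum (fun k : ℤ => m^2 * ‖⟪e k, x⟫‖^2) (m^2 * ‖x‖^2) := hx.mul_left _
  have hle : m^2 * ‖x‖^2 ≤ ‖T x‖^2 := by
    refine hasSum_le (fun k => ?_) hmx hTx'
    rw [norm_mul, mul_pow]
    have hb2 : m^2 ≤ ‖β k‖^2 := by nlinarith [hmβ k, norm_nonneg (β k)]
    exact mul_le_mul_of_nonneg_right hb2 (sq_nonneg _)
  rw [show m^2 * ‖x‖^2 = (m*‖x‖)^2 by ring] at hle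
  exact (pow_le_pow_iff_left₀ (by positivity) (norm_nonneg _) two_ne_zero).mp hle

lemma normTx_le (e : HilbertBasis ℤ ℂ H) (β : ℤ → ℂ) (T : H →L[ℂ] H)
    (hT : ∀ n : ℤ, T (e n) = β n • e (n + 1)) (M : ℝ)
    (hβM : ∀ n, ‖β n‖ ≤ M) (x : H) : ‖T x‖ ≤ M * ‖x‖ := by
  have hM0 : 0 ≤ M := le_trans (norm_nonneg _) (hβM 0)
  have hx := parseval e x
  have hTx := parseval e (T x)
  have hTx' : HasSum (fun k : ℤ => ‖β k * ⟪e k, x⟫‖^2) (‖T x‖^2) := by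
    have h := (Equiv.addRight (1:ℤ)).hasSum_iff.mpr hTx
    rw [Equiv.coe_addRight] at h
    have hcomp : ((fun k : ℤ => ‖⟪e k, T x⟫‖^2) ∘ (fun k : ℤ => k + 1))
        = fun k : ℤ => ‖β k * ⟪e k, x⟫‖^2 := by
      funext k
      simp only [Function.comp_apply]
      rw [coefT e β T hT x (k+1)]
      norm_num
    rwa [hcomp] at h
  have hmx : HasSum (fun k : ℤ => M^2 * ‖⟪e k, x⟫‖^2) (M^2 * ‖x‖^2) := hx.mul_left _
  have hle : ‖T x‖^2 ≤ M^2 * ‖x‖^2 := by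
    refine hasSum_le (fun k => ?_) hTx' hmx
    rw [norm_mul, mul_pow]
    have hb2 : ‖β k‖^2 ≤ M^2 := by nlinarith [hβM k, norm_nonneg (β k)]
    exact mul_le_mul_of_nonneg_right hb2 (sq_nonneg _)
  rw [show M^2 * ‖x‖^2 = (M*‖x‖)^2 by ring] at hle
  exact (pow_le_pow_iff_left₀ (norm_nonneg _) (by positivity) two_ne_zero).mp hle

lemma normTadjx_ge (e : HilbertBasis ℤ ℂ H) (β : ℤ → ℂ) (T : H →L[ℂ] H)
    (hT : ∀ n : ℤ, T (e n) = β n • e (n + 1)) (m : ℝ) (hm0 : 0 ≤ m)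
    (hmβ : ∀ n, m ≤ ‖β n‖) (x : H) :
    m * ‖x‖ ≤ ‖ContinuousLinearMap.adjoint T x‖ := by
  have hTx := parseval e (ContinuousLinearMap.adjoint T x)
  have hx : HasSum (fun k : ℤ => ‖⟪e (k+1), x⟫‖^2) (‖x‖^2) := by
    have := (Equiv.addRight (1:ℤ)).hasSum_iff.mpr (parseval e x)
    simpa [Function.comp_def] using this
  have hTx' : HasSum (fun k : ℤ => ‖conj (β k) * ⟪e (k+1), x⟫‖^2)
      (‖ContinuousLinearMap.adjoint T x‖^2) := by
    convert hTx using 2 with k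
    rw [coefTadj e β T hT]
  have hmx : HasSum (fun k : ℤ => m^2 * ‖⟪e (k+1), x⟫‖^2) (m^2 * ‖x‖^2) := hx.mul_left _
  have hle : m^2 * ‖x‖^2 ≤ ‖ContinuousLinearMap.adjoint T x‖^2 := by
    refine hasSum_le (fun k => ?_) hmx hTx'
    rw [norm_mul, mul_pow, RCLike.norm_conj]
    have hb2 : m^2 ≤ ‖β k‖^2 := by nlinarith [hmβ k, norm_nonneg (β k)]
    exact mul_le_mul_of_nonneg_right hb2 (sq_nonneg _)
  rw [show m^2 * ‖x‖^2 = (m*‖x‖)^2 by ring] at hle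
  exact (pow_le_pow_iff_left₀ (by positivity) (norm_nonneg _) two_ne_zero).mp hle

lemma isUnit_of_bddBelow (A : H →L[ℂ] H) (c : ℝ) (hc : 0 < c)
    (h1 : ∀ x, c * ‖x‖ ≤ ‖A x‖)
    (h2 : ∀ x, c * ‖x‖ ≤ ‖ContinuousLinearMap.adjoint A x‖) : IsUnit A := by
  rw [ContinuousLinearMap.isUnit_iff_bijective]
  constructor
  · intro x y hxy
    have h := h1 (x - y)
    rw [map_sub, sub_eq_zero.mpr hxy] at h
    simp only [norm_zero] at h
    have : ‖x - y‖ ≤ 0 := by nlinarith [norm_nonneg (x-y)]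
    rw [← sub_eq_zero]
    exact norm_le_zero_iff.mp this
  · have hanti : AntilipschitzWith (Real.toNNReal c⁻¹) A := by
      apply ContinuousLinearMap.antilipschitz_of_bound
      intro x
      rw [Real.coe_toNNReal _ (by positivity)]
      rw [inv_mul_eq_div, le_div_iff₀ hc, mul_comm]
      exact h1 x
    have hclosed : IsClosed (Set.range A) := hanti.isClosed_range A.uniformContinuous
    have hclosed' : IsClosed ((LinearMap.range (A : H →ₗ[ℂ] H) : Submodule ℂ H) : Set H) := by
      convert hclosed using 1
      ext y; simp
    haveI : CompleteSpace (LinearMap.range (A : H →ₗ[ℂ] H) : Submodule ℂ H) :=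
      hclosed'.completeSpace_coe
    have horth : (LinearMap.range (A : H →ₗ[ℂ] H) : Submodule ℂ H)ᗮ = ⊥ := by
      rw [Submodule.eq_bot_iff]
      intro v hv
      have hAv : ContinuousLinearMap.adjoint A v = 0 := by
        have hinner : ∀ x : H, ⟪ContinuousLinearMap.adjoint A v, x⟫ = 0 := by
          intro x
          rw [ContinuousLinearMap.adjoint_inner_left]
          have := (Submodule.mem_orthogonal _ v).mp hv (A x) ⟨x, rfl⟩
          rw [← inner_conj_symm]
          rw [this]
          simp
        have := hinner (ContinuousLinearMap.adjoint A v)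
        exact inner_self_eq_zero.mp this
      have := h2 v
      rw [hAv, norm_zero] at this
      have : ‖v‖ ≤ 0 := by nlinarith [norm_nonneg v]
      exact norm_le_zero_iff.mp this
    have htop : (LinearMap.range (A : H →ₗ[ℂ] H) : Submodule ℂ H) = ⊤ :=
      Submodule.orthogonal_eq_bot_iff.mp horth
    exact LinearMap.range_eq_top.mp htop

lemma mem_spectrum_adjoint_iff (A : H →L[ℂ] H) (mu : ℂ) :
    conj mu ∈ spectrum ℂ (ContinuousLinearMap.adjoint A) ↔ mu ∈ spectrum ℂ A := by
  rw [← ContinuousLinearMap.star_eq_adjoint, spectrum.map_star]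
  simp

lemma norm_sq_sum (e : HilbertBasis ℤ ℂ H) (a : ℤ) (f : ℕ → ℂ) (s : Finset ℕ) :
    ‖∑ n ∈ s, f n • e (a + n)‖^2 = ∑ n ∈ s, ‖f n‖^2 := by
  have hinj : Function.Injective (fun n : ℕ => a + (n:ℤ)) := by
    intro p q h
    simp only [add_right_inj, Int.natCast_inj] at h
    exact h
  have hon : Orthonormal ℂ (fun n : ℕ => e (a + n)) := e.orthonormal.comp _ hinj
  have h := hon.inner_sum f f s
  have hre := congrArg Complex.re h
  have hL : (⟪∑ n ∈ s, f n • e (a + (n:ℤ)), ∑ n ∈ s, f n • e (a + (n:ℤ))⟫).re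
      = ‖∑ n ∈ s, f n • e (a + (n:ℤ))‖^2 := by
    have := @inner_self_eq_norm_sq ℂ _ _ _ _ (∑ n ∈ s, f n • e (a + (n:ℤ)))
    simpa using this
  rw [hL] at hre
  rw [hre, Complex.re_sum]
  refine Finset.sum_congr rfl fun n _ => ?_
  rw [RCLike.conj_mul]
  simp [← Complex.ofReal_pow]

lemma sum_shift {G : Type*} [AddCommGroup G] (g : ℕ → G) (L : ℕ) :
    ∑ n ∈ Finset.range (L+1), g (n+1)
      = (∑ n ∈ Finset.range (L+1), g n) + g (L+1) - g 0 := by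
  have h1 := Finset.sum_range_succ' g (L+1)
  have h2 := Finset.sum_range_succ g (L+1)
  have h3 : (∑ n ∈ Finset.range (L+1), g (n+1)) + g 0
      = (∑ n ∈ Finset.range (L+1), g n) + g (L+1) := by rw [← h1, h2]
  exact eq_sub_of_add_eq h3

lemma adj_basis (e : HilbertBasis ℤ ℂ H) (β : ℤ → ℂ) (T : H →L[ℂ] H)
    (hT : ∀ n : ℤ, T (e n) = β n • e (n + 1)) (k : ℤ) :
    ContinuousLinearMap.adjoint T (e k) = conj (β (k-1)) • e (k-1) := by
  set w := ContinuousLinearMap.adjoint T (e k) - conj (β (k-1)) • e (k-1) with hw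
  have hco : ∀ j : ℤ, ⟪e j, w⟫ = 0 := by
    intro j
    rw [hw, inner_sub_right, coefTadj e β T hT, inner_smul_right]
    have h1 : ⟪e (j+1), e k⟫ = if j+1 = k then 1 else 0 :=
      orthonormal_iff_ite.mp e.orthonormal _ _
    have h2 : ⟪e j, e (k-1)⟫ = if j = k-1 then 1 else 0 :=
      orthonormal_iff_ite.mp e.orthonormal _ _
    rw [h1, h2]
    by_cases hj : j = k - 1
    · subst hj
      rw [if_pos (by omega), if_pos rfl]
      ring
    · rw [if_neg (by omega), if_neg hj]
      ring
  have hP := parseval e w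
  rw [show (fun j : ℤ => ‖⟪e j, w⟫‖^2) = fun _ => (0:ℝ) from funext fun j => by
    rw [hco j]; simp] at hP
  have : ‖w‖^2 = 0 := hP.unique hasSum_zero
  have hw0 : w = 0 := by
    have := pow_eq_zero_iff (n := 2) (by norm_num) |>.mp this
    exact norm_eq_zero.mp this
  have := sub_eq_zero.mp (hw ▸ hw0)
  exact this

lemma t_window (e : HilbertBasis ℤ ℂ H) (β : ℤ → ℂ) (T : H →L[ℂ] H)
    (hT : ∀ n : ℤ, T (e n) = β n • e (n + 1))
    (lam : ℂ) (hlam0 : lam ≠ 0) (a : ℤ) (B : ℕ)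
    (d : ℕ → ℂ) (hd : ∀ n, d n = ∏ j ∈ Finset.range n, (β (a+j)/lam)) :
    T (∑ n ∈ Finset.range (B+1), d n • e (a+n))
      - lam • (∑ n ∈ Finset.range (B+1), d n • e (a+n))
      = (lam * d (B+1)) • e (a+(B+1:ℕ)) - lam • e a := by
  set g : ℕ → H := fun n => (lam * d n) • e (a+n) with hg
  have hTx : T (∑ n ∈ Finset.range (B+1), d n • e (a+n))
      = ∑ n ∈ Finset.range (B+1), g (n+1) := by
    rw [map_sum]
    refine Finset.sum_congr rfl fun n _ => ?_
    rw [map_smul, hT]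
    simp only [hg]
    have hdn : lam * d (n+1) = β (a+n) * d n := by
      rw [hd (n+1), hd n, Finset.prod_range_succ]
      field_simp
    rw [smul_smul, hdn]
    have hidx : a + (((n:ℕ)+1 : ℕ) : ℤ) = a + (n:ℤ) + 1 := by push_cast; ring
    rw [hidx, mul_comm]
  have hlx : lam • (∑ n ∈ Finset.range (B+1), d n • e (a+n))
      = ∑ n ∈ Finset.range (B+1), g n := by
    rw [Finset.smul_sum]
    refine Finset.sum_congr rfl fun n _ => ?_
    simp only [hg]
    rw [smul_smul]
  rw [hTx, hlx, sum_shift g B]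
  have hg0 : g 0 = lam • e a := by
    simp only [hg, hd 0]
    simp
  rw [hg0]
  abel

lemma adj_window (e : HilbertBasis ℤ ℂ H) (β : ℤ → ℂ) (T : H →L[ℂ] H)
    (hT : ∀ n : ℤ, T (e n) = β n • e (n + 1)) (hnz : ∀ n, β n ≠ 0)
    (lam : ℂ) (a : ℤ) (B : ℕ)
    (d : ℕ → ℂ) (hd : ∀ n, d n = ∏ j ∈ Finset.range n, (conj lam / conj (β (a+j)))) :
    ContinuousLinearMap.adjoint T (∑ n ∈ Finset.range (B+1), d n • e (a+n))
      - conj lam • (∑ n ∈ Finset.range (B+1), d n • e (a+n))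
      = conj (β (a-1)) • e (a-1) - (conj lam * d B) • e (a+B) := by
  set G : ℕ → H := fun n => (conj lam * d n) • e (a+n) with hG
  set h : ℕ → H := fun n => (conj (β (a+n-1)) * d n) • e (a+n-1) with hh
  have hTx : ContinuousLinearMap.adjoint T (∑ n ∈ Finset.range (B+1), d n • e (a+n))
      = ∑ n ∈ Finset.range (B+1), h n := by
    rw [map_sum]
    refine Finset.sum_congr rfl fun n _ => ?_
    rw [map_smul, adj_basis e β T hT]
    simp only [hh]
    rw [smul_smul, mul_comm]
  have hstep : ∀ n : ℕ, h (n+1) = G n := by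
    intro n
    simp only [hh, hG]
    have hidx : a + (((n:ℕ)+1:ℕ) : ℤ) - 1 = a + (n:ℤ) := by push_cast; ring
    rw [hidx]
    congr 1
    have hb : conj (β (a+n)) ≠ 0 := by
      simp only [ne_eq, map_eq_zero]
      exact hnz _
    rw [hd (n+1), Finset.prod_range_succ, ← hd n]
    calc conj (β (a+(n:ℤ))) * (d n * (conj lam / conj (β (a+(n:ℤ)))))
        = (conj (β (a+(n:ℤ))) / conj (β (a+(n:ℤ)))) * (conj lam * d n) := by ring
      _ = conj lam * d n := by rw [div_self hb, one_mul]
  have hsum : ∑ n ∈ Finset.range (B+1), h n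
      = h 0 + ∑ n ∈ Finset.range B, G n := by
    rw [Finset.sum_range_succ' h B]
    rw [Finset.sum_congr rfl fun n _ => hstep n]
    abel
  have hlx : conj lam • (∑ n ∈ Finset.range (B+1), d n • e (a+n))
      = (∑ n ∈ Finset.range B, G n) + G B := by
    rw [Finset.smul_sum, ← Finset.sum_range_succ G B]
    refine Finset.sum_congr rfl fun n _ => ?_
    simp only [hG]
    rw [smul_smul]
  have hh0 : h 0 = conj (β (a-1)) • e (a-1) := by
    simp only [hh, hd 0]
    simp
  rw [hTx, hsum, hlx, hh0, hG]
  abel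

lemma memB (e : HilbertBasis ℤ ℂ H) (β : ℤ → ℂ) (T : H →L[ℂ] H)
    (hT : ∀ n : ℤ, T (e n) = β n • e (n + 1))
    (M : ℝ) (hM0 : 0 < M) (hβM : ∀ n, ‖β n‖ ≤ M)
    (hM : Filter.Tendsto (fun n : ℤ => ‖β n‖) Filter.atTop (nhds M))
    (lam : ℂ) (hlam : ‖lam‖ = M) : lam ∈ spectrum ℂ T := by
  apply approx_mem_spectrum
  intro ε hε
  obtain ⟨L, hL⟩ := exists_nat_ge ((4*M/ε)^2)
  set δ : ℝ := 1/(2*((L:ℝ)+1)) with hδdef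
  have hδ0 : 0 < δ := by positivity
  have hδhalf : (L:ℝ) * δ ≤ 1/2 := by
    rw [hδdef, mul_one_div, div_le_div_iff₀ (by positivity) (by norm_num)]
    nlinarith [Nat.cast_nonneg (α := ℝ) L]
  have hδ1 : δ ≤ 1/2 := by
    rw [hδdef]
    rw [div_le_div_iff₀ (by positivity) (by norm_num)]
    nlinarith [Nat.cast_nonneg (α := ℝ) L]
  have hMδ : M*(1-δ) < M := by nlinarith
  obtain ⟨a, ha⟩ := Filter.eventually_atTop.mp (hM.eventually (eventually_gt_nhds hMδ))
  have hlam0 : lam ≠ 0 := by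
    intro h
    rw [h, norm_zero] at hlam
    exact absurd hlam.symm hM0.ne'
  set d : ℕ → ℂ := fun n => ∏ j ∈ Finset.range n, (β (a+j)/lam) with hd
  have hdn : ∀ n, ‖d n‖ = ∏ j ∈ Finset.range n, (‖β (a+(j:ℤ))‖/M) := by
    intro n
    rw [hd]
    rw [norm_prod]
    exact Finset.prod_congr rfl fun j _ => by rw [norm_div, hlam]
  have hβpos : ∀ j : ℕ, (0:ℝ) < ‖β (a+(j:ℤ))‖ := by
    intro j
    have := ha (a+(j:ℤ)) (by omega)
    nlinarith
  have hub : ∀ n, ‖d n‖ ≤ 1 := by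
    intro n
    rw [hdn]
    apply Finset.prod_le_one (fun j _ => by positivity)
    intro j _
    rw [div_le_one hM0]
    exact hβM _
  have hlb : ∀ n, n ≤ L → (1:ℝ)/2 ≤ ‖d n‖ := by
    intro n hn
    rw [hdn]
    have h1 : ∀ j ∈ Finset.range n, (1-δ) ≤ ‖β (a+(j:ℤ))‖/M := by
      intro j _
      rw [le_div_iff₀ hM0]
      have := ha (a+(j:ℤ)) (by omega)
      nlinarith
    have h2 : (1-δ)^n ≤ ∏ j ∈ Finset.range n, (‖β (a+(j:ℤ))‖/M) := by
      calc (1-δ)^n = ∏ _j ∈ Finset.range n, (1-δ) := by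
            rw [Finset.prod_const, Finset.card_range]
        _ ≤ _ := Finset.prod_le_prod (fun j _ => by linarith) h1
    have h3 : 1 - (n:ℝ)*δ ≤ (1-δ)^n := by
      have := one_add_mul_le_pow (a := -δ) (by linarith) n
      calc 1 - (n:ℝ)*δ = 1 + (n:ℝ)*(-δ) := by ring
        _ ≤ (1 + -δ)^n := this
        _ = (1-δ)^n := by ring_nf
    have h4 : (n:ℝ)*δ ≤ (L:ℝ)*δ := by
      apply mul_le_mul_of_nonneg_right _ hδ0.le
      exact_mod_cast hn
    linarith
  set x := ∑ n ∈ Finset.range (L+1), d n • e (a+n) with hx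
  have hx2 : ((L:ℝ)+1)/4 ≤ ‖x‖^2 := by
    rw [hx, norm_sq_sum]
    calc ((L:ℝ)+1)/4 = ∑ _n ∈ Finset.range (L+1), (1/4 : ℝ) := by
          rw [Finset.sum_const, Finset.card_range]
          push_cast
          ring
      _ ≤ ∑ n ∈ Finset.range (L+1), ‖d n‖^2 := by
          apply Finset.sum_le_sum
          intro n hn
          have := hlb n (by
            have := Finset.mem_range.mp hn
            omega)
          nlinarith
  have hxM : 2*M/ε ≤ ‖x‖ := by
    have h1 : (2*M/ε)^2 ≤ ‖x‖^2 := by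
      have he : (2*M/ε)^2 = (4*M/ε)^2/4 := by ring
      rw [he]
      have : ((4*M/ε)^2)/4 ≤ ((L:ℝ)+1)/4 := by linarith
      linarith
    exact (pow_le_pow_iff_left₀ (by positivity) (norm_nonneg _) two_ne_zero).mp h1
  have hx0 : x ≠ 0 := by
    have : (0:ℝ) < ‖x‖ := lt_of_lt_of_le (by positivity) hxM
    exact norm_pos_iff.mp this
  refine ⟨x, hx0, ?_⟩
  have hdiff := t_window e β T hT lam hlam0 a L d (fun n => rfl)
  rw [← hx] at hdiff
  rw [hdiff]
  have hn1 : ‖e (a+((L:ℕ)+1:ℕ))‖ = 1 := e.orthonormal.1 _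
  have hn2 : ‖e a‖ = 1 := e.orthonormal.1 _
  calc ‖(lam * d (L+1)) • e (a+((L:ℕ)+1:ℕ)) - lam • e a‖
      ≤ ‖(lam * d (L+1)) • e (a+((L:ℕ)+1:ℕ))‖ + ‖lam • e a‖ := norm_sub_le _ _
    _ = ‖lam‖*‖d (L+1)‖ + ‖lam‖ := by rw [norm_smul, norm_smul, norm_mul, hn1, hn2]; ring
    _ ≤ M*1 + M := by
        rw [hlam]
        have := hub (L+1)
        nlinarith
    _ = 2*M := by ring
    _ ≤ ε * ‖x‖ := by
        have := mul_le_mul_of_nonneg_left hxM hε.le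
        calc 2*M = ε * (2*M/ε) := by field_simp
          _ ≤ ε * ‖x‖ := this

lemma memC (e : HilbertBasis ℤ ℂ H) (β : ℤ → ℂ) (T : H →L[ℂ] H)
    (hT : ∀ n : ℤ, T (e n) = β n • e (n + 1)) (hnz : ∀ n, β n ≠ 0)
    (m : ℝ) (hm0 : 0 < m) (hmβ : ∀ n, m ≤ ‖β n‖)
    (hm : Filter.Tendsto (fun n : ℤ => ‖β n‖) Filter.atBot (nhds m))
    (lam : ℂ) (hlam : ‖lam‖ = m) : lam ∈ spectrum ℂ T := by
  rw [← mem_spectrum_adjoint_iff T lam]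
  apply approx_mem_spectrum
  intro ε hε
  obtain ⟨L, hL⟩ := exists_nat_ge ((6*m/ε)^2)
  set δ : ℝ := 1/(2*((L:ℝ)+1)) with hδdef
  have hδ0 : 0 < δ := by positivity
  have hδhalf : (L:ℝ) * δ ≤ 1/2 := by
    rw [hδdef, mul_one_div, div_le_div_iff₀ (by positivity) (by norm_num)]
    nlinarith [Nat.cast_nonneg (α := ℝ) L]
  have hδ1 : δ ≤ 1/2 := by
    rw [hδdef, div_le_div_iff₀ (by positivity) (by norm_num)]
    nlinarith [Nat.cast_nonneg (α := ℝ) L]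
  have h1δ : (0:ℝ) < 1 - δ := by linarith
  have hmδ : m < m/(1-δ) := by
    rw [lt_div_iff₀ h1δ]
    nlinarith
  obtain ⟨a₀, ha₀⟩ := Filter.eventually_atBot.mp (hm.eventually (eventually_lt_nhds hmδ))
  set a : ℤ := a₀ - L with hadef
  have hreg : ∀ k : ℤ, k ≤ a + L → ‖β k‖ < m/(1-δ) := fun k hk => ha₀ k (by omega)
  set d : ℕ → ℂ := fun n => ∏ j ∈ Finset.range n, (conj lam / conj (β (a+j))) with hd
  have hdn : ∀ n, ‖d n‖ = ∏ j ∈ Finset.range n, (m/‖β (a+(j:ℤ))‖) := by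
    intro n
    rw [hd, norm_prod]
    exact Finset.prod_congr rfl fun j _ => by
      rw [norm_div, RCLike.norm_conj, RCLike.norm_conj, hlam]
  have hβpos : ∀ k : ℤ, (0:ℝ) < ‖β k‖ := fun k => lt_of_lt_of_le hm0 (hmβ k)
  have hub : ∀ n, ‖d n‖ ≤ 1 := by
    intro n
    rw [hdn]
    apply Finset.prod_le_one (fun j _ => by positivity)
    intro j _
    rw [div_le_one (hβpos _)]
    exact hmβ _
  have hlb : ∀ n, n ≤ L → (1:ℝ)/2 ≤ ‖d n‖ := by
    intro n hn
    rw [hdn]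
    have h1 : ∀ j ∈ Finset.range n, (1-δ) ≤ m/‖β (a+(j:ℤ))‖ := by
      intro j hj
      rw [le_div_iff₀ (hβpos _)]
      have hjL : (j:ℤ) ≤ L := by
        have := Finset.mem_range.mp hj
        omega
      have := hreg (a+(j:ℤ)) (by omega)
      calc (1-δ) * ‖β (a+(j:ℤ))‖ ≤ (1-δ) * (m/(1-δ)) := by nlinarith
        _ = m := by field_simp
    have h2 : (1-δ)^n ≤ ∏ j ∈ Finset.range n, (m/‖β (a+(j:ℤ))‖) := by
      calc (1-δ)^n = ∏ _j ∈ Finset.range n, (1-δ) := by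
            rw [Finset.prod_const, Finset.card_range]
        _ ≤ _ := Finset.prod_le_prod (fun j _ => by linarith) h1
    have h3 : 1 - (n:ℝ)*δ ≤ (1-δ)^n := by
      have := one_add_mul_le_pow (a := -δ) (by linarith) n
      calc 1 - (n:ℝ)*δ = 1 + (n:ℝ)*(-δ) := by ring
        _ ≤ (1 + -δ)^n := this
        _ = (1-δ)^n := by ring_nf
    have h4 : (n:ℝ)*δ ≤ (L:ℝ)*δ := by
      apply mul_le_mul_of_nonneg_right _ hδ0.le
      exact_mod_cast hn
    linarith
  set x := ∑ n ∈ Finset.range (L+1), d n • e (a+n) with hx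
  have hx2 : ((L:ℝ)+1)/4 ≤ ‖x‖^2 := by
    rw [hx, norm_sq_sum]
    calc ((L:ℝ)+1)/4 = ∑ _n ∈ Finset.range (L+1), (1/4 : ℝ) := by
          rw [Finset.sum_const, Finset.card_range]
          push_cast
          ring
      _ ≤ ∑ n ∈ Finset.range (L+1), ‖d n‖^2 := by
          apply Finset.sum_le_sum
          intro n hn
          have := hlb n (by
            have := Finset.mem_range.mp hn
            omega)
          nlinarith
  have hxM : 3*m/ε ≤ ‖x‖ := by
    have h1 : (3*m/ε)^2 ≤ ‖x‖^2 := by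
      have he : (3*m/ε)^2 = (6*m/ε)^2/4 := by ring
      rw [he]
      have : ((6*m/ε)^2)/4 ≤ ((L:ℝ)+1)/4 := by linarith
      linarith
    exact (pow_le_pow_iff_left₀ (by positivity) (norm_nonneg _) two_ne_zero).mp h1
  have hx0 : x ≠ 0 := by
    have : (0:ℝ) < ‖x‖ := lt_of_lt_of_le (by positivity) hxM
    exact norm_pos_iff.mp this
  refine ⟨x, hx0, ?_⟩
  have hdiff := adj_window e β T hT hnz lam a L d (fun n => rfl)
  rw [← hx] at hdiff
  rw [hdiff]
  have hn1 : ‖e (a-1)‖ = 1 := e.orthonormal.1 _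
  have hn2 : ‖e (a+(L:ℤ))‖ = 1 := e.orthonormal.1 _
  have hβa1 : ‖β (a-1)‖ ≤ 2*m := by
    have := hreg (a-1) (by omega)
    have h2m : m/(1-δ) ≤ 2*m := by
      rw [div_le_iff₀ h1δ]
      nlinarith
    linarith
  calc ‖conj (β (a-1)) • e (a-1) - (conj lam * d L) • e (a+(L:ℕ))‖
      ≤ ‖conj (β (a-1)) • e (a-1)‖ + ‖(conj lam * d L) • e (a+(L:ℕ))‖ := norm_sub_le _ _
    _ = ‖β (a-1)‖ + m * ‖d L‖ := by
        rw [norm_smul, norm_smul, norm_mul, RCLike.norm_conj, RCLike.norm_conj, hlam, hn1, hn2]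
        ring
    _ ≤ 2*m + m*1 := by
        have := hub L
        have := hmβ (a-1)
        nlinarith
    _ = 3*m := by ring
    _ ≤ ε * ‖x‖ := by
        have := mul_le_mul_of_nonneg_left hxM hε.le
        calc 3*m = ε * (3*m/ε) := by field_simp
          _ ≤ ε * ‖x‖ := this

lemma memA (e : HilbertBasis ℤ ℂ H) (β : ℤ → ℂ) (T : H →L[ℂ] H)
    (hT : ∀ n : ℤ, T (e n) = β n • e (n + 1)) (hnz : ∀ n, β n ≠ 0)
    (m M : ℝ) (hm0 : 0 ≤ m) (hmβ : ∀ n, m ≤ ‖β n‖) (hβM : ∀ n, ‖β n‖ ≤ M)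
    (hmono : Monotone (fun n : ℤ => ‖β n‖))
    (hM : Filter.Tendsto (fun n : ℤ => ‖β n‖) Filter.atTop (nhds M))
    (hm : Filter.Tendsto (fun n : ℤ => ‖β n‖) Filter.atBot (nhds m))
    (lam : ℂ) (hl1 : m < ‖lam‖) (hl2 : ‖lam‖ < M) : lam ∈ spectrum ℂ T := by
  rw [← mem_spectrum_adjoint_iff T lam]
  apply approx_mem_spectrum
  intro ε hε
  set r := ‖lam‖ with hrdef
  have hr0 : 0 < r := lt_of_le_of_lt hm0 hl1
  set s : ℝ := (m+r)/2 with hsdef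
  have hms : m < s := by rw [hsdef]; linarith
  have hsr : s < r := by rw [hsdef]; linarith
  have hs0 : 0 < s := lt_of_le_of_lt hm0 hms
  set r' : ℝ := (r+M)/2 with hr'def
  have hrr' : r < r' := by rw [hr'def]; linarith
  have hr'M : r' < M := by rw [hr'def]; linarith
  have hr'0 : 0 < r' := lt_trans hr0 hrr'
  obtain ⟨k₁, hk₁⟩ := Filter.eventually_atBot.mp (hm.eventually (eventually_lt_nhds hms))
  obtain ⟨k₂', hk₂'⟩ := Filter.eventually_atTop.mp (hM.eventually (eventually_gt_nhds hr'M))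
  set k₂ : ℤ := max k₁ k₂' with hk₂def
  have hβpos : ∀ k : ℤ, (0:ℝ) < ‖β k‖ := fun k => norm_pos_iff.mpr (hnz k)
  set c₁ : ℝ := ‖β k₁‖ with hc₁def
  have hc₁0 : 0 < c₁ := hβpos k₁
  set K : ℕ := (k₂ - k₁).toNat with hKdef
  have hk₁k₂ : k₁ + (K:ℤ) = k₂ := by
    have : k₁ ≤ k₂ := le_max_left _ _
    omega
  set C : ℝ := (r/c₁)^K with hCdef
  have hC0 : 0 < C := by positivity
  -- choose N
  have hq₁1 : s/r < 1 := (div_lt_one hr0).mpr hsr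
  have htN : Filter.Tendsto (fun n : ℕ => s * (s/r)^n) Filter.atTop (nhds 0) := by
    have := tendsto_pow_atTop_nhds_zero_of_lt_one (by positivity : (0:ℝ) ≤ s/r) hq₁1
    have h2 := this.const_mul s
    simpa using h2
  obtain ⟨N, hN⟩ : ∃ N : ℕ, s * (s/r)^N < ε/2 := by
    have := (htN.eventually (eventually_lt_nhds (by positivity : (0:ℝ) < ε/2))).exists
    exact this
  -- choose L
  have hq₂1 : r/r' < 1 := (div_lt_one hr'0).mpr hrr'
  have htL : Filter.Tendsto (fun n : ℕ => (r*C) * (r/r')^n) Filter.atTop (nhds 0) := by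
    have := tendsto_pow_atTop_nhds_zero_of_lt_one (by positivity : (0:ℝ) ≤ r/r') hq₂1
    have h2 := this.const_mul (r*C)
    simpa using h2
  obtain ⟨L, hL⟩ : ∃ L : ℕ, (r*C) * (r/r')^L < ε/2 := by
    have := (htL.eventually (eventually_lt_nhds (by positivity : (0:ℝ) < ε/2))).exists
    exact this
  set B : ℕ := N + K + L with hBdef
  set a : ℤ := k₁ - N with hadef
  set d : ℕ → ℂ := fun n => ∏ j ∈ Finset.range n, (conj lam / conj (β (a+j))) with hd
  have hdn : ∀ n, ‖d n‖ = ∏ j ∈ Finset.range n, (r/‖β (a+(j:ℤ))‖) := by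
    intro n
    rw [hd, norm_prod]
    exact Finset.prod_congr rfl fun j _ => by
      rw [norm_div, RCLike.norm_conj, RCLike.norm_conj]
  -- lower bound at N
  have hlowN : (r/s)^N ≤ ‖d N‖ := by
    rw [hdn]
    calc (r/s)^N = ∏ _j ∈ Finset.range N, (r/s) := by
          rw [Finset.prod_const, Finset.card_range]
      _ ≤ _ := by
          apply Finset.prod_le_prod (fun j _ => by positivity)
          intro j hj
          have hjN : (j:ℤ) < N := by exact_mod_cast Finset.mem_range.mp hj
          have hle : ‖β (a+(j:ℤ))‖ ≤ s := (hk₁ (a+(j:ℤ)) (by omega)).le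
          exact div_le_div_of_nonneg_left hr0.le (hβpos _) hle
  have hdN0 : 0 < ‖d N‖ := lt_of_lt_of_le (by positivity) hlowN
  -- segment upper bounds
  have hseg : ∀ (p : ℕ) (c : ℝ), 0 < c → ∀ (t : ℕ),
      (∀ j : ℕ, p ≤ j → j < p + t → c ≤ ‖β (a+(j:ℤ))‖) →
      ‖d (p+t)‖ ≤ ‖d p‖ * (r/c)^t := by
    intro p c hc t
    induction t with
    | zero => intro _; simp
    | succ t ih =>
      intro hj
      have h1 := ih (fun j hj1 hj2 => hj j hj1 (by omega))
      have hdd : d (p+(t+1)) = d (p+t) * (conj lam / conj (β (a+((p+t:ℕ):ℤ)))) := by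
        simp only [hd]
        rw [show p+(t+1) = (p+t)+1 by omega, Finset.prod_range_succ]
      have hnrm : ‖d (p+(t+1))‖ = ‖d (p+t)‖ * (r/‖β (a+((p+t:ℕ):ℤ))‖) := by
        rw [hdd, norm_mul, norm_div, RCLike.norm_conj, RCLike.norm_conj]
      have hfac : r/‖β (a+((p+t:ℕ):ℤ))‖ ≤ r/c :=
        div_le_div_of_nonneg_left hr0.le hc (hj (p+t) (by omega) (by omega))
      calc ‖d (p+(t+1))‖ = ‖d (p+t)‖ * (r/‖β (a+((p+t:ℕ):ℤ))‖) := hnrm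
        _ ≤ (‖d p‖ * (r/c)^t) * (r/c) := by
            apply mul_le_mul h1 hfac (by positivity) (by positivity)
        _ = ‖d p‖ * (r/c)^(t+1) := by ring
  have hupNK : ‖d (N+K)‖ ≤ ‖d N‖ * (r/c₁)^K := by
    apply hseg N c₁ hc₁0 K
    intro j hj1 _
    have : k₁ ≤ a + (j:ℤ) := by omega
    exact hmono this
  have hupB : ‖d B‖ ≤ ‖d (N+K)‖ * (r/r')^L := by
    rw [hBdef, show N+K+L = (N+K)+L from rfl]
    apply hseg (N+K) r' hr'0 L
    intro j hj1 _
    have hk2 : k₂' ≤ a + (j:ℤ) := by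
      have h1 : k₂' ≤ k₂ := le_max_right _ _
      omega
    exact (hk₂' (a+(j:ℤ)) hk2).le
  have hdB : ‖d B‖ ≤ ‖d N‖ * C * (r/r')^L := by
    calc ‖d B‖ ≤ ‖d (N+K)‖ * (r/r')^L := hupB
      _ ≤ (‖d N‖ * C) * (r/r')^L := by
          apply mul_le_mul_of_nonneg_right _ (by positivity)
          rw [hCdef]
          exact hupNK
      _ = ‖d N‖ * C * (r/r')^L := by ring
  -- the vector
  set x := ∑ n ∈ Finset.range (B+1), d n • e (a+n) with hx
  have hxge : ‖d N‖ ≤ ‖x‖ := by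
    have h1 : ‖d N‖^2 ≤ ‖x‖^2 := by
      rw [hx, norm_sq_sum]
      apply Finset.single_le_sum (f := fun n => ‖d n‖^2) (fun n _ => by positivity)
      rw [Finset.mem_range]
      omega
    exact (pow_le_pow_iff_left₀ (norm_nonneg _) (norm_nonneg _) two_ne_zero).mp h1
  have hx0 : x ≠ 0 := by
    have : (0:ℝ) < ‖x‖ := lt_of_lt_of_le hdN0 hxge
    exact norm_pos_iff.mp this
  refine ⟨x, hx0, ?_⟩
  have hdiff := adj_window e β T hT hnz lam a B d (fun n => rfl)
  rw [← hx] at hdiff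
  rw [hdiff]
  have hn1 : ‖e (a-1)‖ = 1 := e.orthonormal.1 _
  have hn2 : ‖e (a+(B:ℤ))‖ = 1 := e.orthonormal.1 _
  have hβa1 : ‖β (a-1)‖ ≤ s := (hk₁ (a-1) (by omega)).le
  have hkey1 : s ≤ (ε/2) * ‖d N‖ := by
    have hone : (s/r) * (r/s) = 1 := by field_simp
    calc s = s * ((s/r)*(r/s))^N := by rw [hone, one_pow, mul_one]
      _ = (s*(s/r)^N) * (r/s)^N := by rw [mul_pow]; ring
      _ ≤ (ε/2) * (r/s)^N := mul_le_mul_of_nonneg_right hN.le (by positivity)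
      _ ≤ (ε/2) * ‖d N‖ := mul_le_mul_of_nonneg_left hlowN (by positivity)
  have hkey2 : r * ‖d B‖ ≤ (ε/2) * ‖d N‖ := by
    calc r * ‖d B‖ ≤ r * (‖d N‖ * C * (r/r')^L) :=
          mul_le_mul_of_nonneg_left hdB hr0.le
      _ = ((r*C) * (r/r')^L) * ‖d N‖ := by ring
      _ ≤ (ε/2) * ‖d N‖ := mul_le_mul_of_nonneg_right hL.le (norm_nonneg _)
  calc ‖conj (β (a-1)) • e (a-1) - (conj lam * d B) • e (a+(B:ℕ))‖
      ≤ ‖conj (β (a-1)) • e (a-1)‖ + ‖(conj lam * d B) • e (a+(B:ℕ))‖ := norm_sub_le _ _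
    _ = ‖β (a-1)‖ + r * ‖d B‖ := by
        rw [norm_smul, norm_smul, norm_mul, RCLike.norm_conj, RCLike.norm_conj, hn1, hn2, ← hrdef]
        ring
    _ ≤ (ε/2) * ‖d N‖ + (ε/2) * ‖d N‖ := by
        have := hβa1.trans hkey1
        linarith
    _ = ε * ‖d N‖ := by ring
    _ ≤ ε * ‖x‖ := mul_le_mul_of_nonneg_left hxge hε.le

end BWSaux



/-- The spectrum of a hyponormal bilateral weighted shift with nonzero weights
(and of its adjoint) is exactly the closed annulus `{λ : m ≤ ‖λ‖ ≤ M}`. -/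
theorem spectrum_of_hyponormal_bilateral_weighted_shift
    {H : Type*} [NormedAddCommGroup H] [InnerProductSpace ℂ H] [CompleteSpace H]
    (e : HilbertBasis ℤ ℂ H) (β : ℤ → ℂ) (T : H →L[ℂ] H)
    (hT : ∀ n : ℤ, T (e n) = β n • e (n + 1))
    (hmono : ∀ n : ℤ, ‖β n‖ ≤ ‖β (n + 1)‖)
    (hnz : ∀ n : ℤ, β n ≠ 0)
    (M : ℝ) (hM : Filter.Tendsto (fun n : ℤ => ‖β n‖) Filter.atTop (nhds M))
    (m : ℝ) (hm : Filter.Tendsto (fun n : ℤ => ‖β n‖) Filter.atBot (nhds m)) :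
    spectrum ℂ T = {lam : ℂ | m ≤ ‖lam‖ ∧ ‖lam‖ ≤ M} ∧
      spectrum ℂ (ContinuousLinearMap.adjoint T)
        = {lam : ℂ | m ≤ ‖lam‖ ∧ ‖lam‖ ≤ M} := by
  have hmono' : Monotone (fun n : ℤ => ‖β n‖) := monotone_int_of_le_succ hmono
  have hβM : ∀ n, ‖β n‖ ≤ M := fun n => hmono'.ge_of_tendsto hM n
  have hmβ : ∀ n, m ≤ ‖β n‖ := fun n => hmono'.le_of_tendsto hm n
  have hm0 : 0 ≤ m := ge_of_tendsto hm (Filter.Eventually.of_forall fun k => norm_nonneg (β k))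
  have hM0 : 0 < M := lt_of_lt_of_le (norm_pos_iff.mpr (hnz 0)) (hβM 0)
  have hTnorm : ‖T‖ ≤ M :=
    ContinuousLinearMap.opNorm_le_bound T hM0.le (fun x => BWSaux.normTx_le e β T hT M hβM x)
  have hsub : spectrum ℂ T ⊆ {lam : ℂ | m ≤ ‖lam‖ ∧ ‖lam‖ ≤ M} := by
    intro lam hlam
    constructor
    · by_contra hcon
      push_neg at hcon
      have hc : 0 < m - ‖lam‖ := by linarith
      have hadj : ContinuousLinearMap.adjoint (algebraMap ℂ (H →L[ℂ] H) lam - T)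
          = algebraMap ℂ (H →L[ℂ] H) (conj lam) - ContinuousLinearMap.adjoint T := by
        rw [← ContinuousLinearMap.star_eq_adjoint, ← ContinuousLinearMap.star_eq_adjoint,
          star_sub]
        congr 1
        rw [Algebra.algebraMap_eq_smul_one, Algebra.algebraMap_eq_smul_one, star_smul, star_one]
        rfl
      have hunit : IsUnit (algebraMap ℂ (H →L[ℂ] H) lam - T) := by
        apply BWSaux.isUnit_of_bddBelow _ (m - ‖lam‖) hc
        · intro x
          have h1 := BWSaux.normTx_ge e β T hT m hm0 hmβ x
          have h2 : ‖(algebraMap ℂ (H →L[ℂ] H) lam - T) x‖ = ‖lam • x - T x‖ := by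
            rw [ContinuousLinearMap.sub_apply, Algebra.algebraMap_eq_smul_one,
              ContinuousLinearMap.smul_apply, ContinuousLinearMap.one_apply]
          rw [h2]
          have h3 : ‖T x‖ - ‖lam • x‖ ≤ ‖lam • x - T x‖ := by
            rw [norm_sub_rev]
            exact norm_sub_norm_le _ _
          rw [norm_smul] at h3
          nlinarith [norm_nonneg x]
        · intro x
          rw [hadj]
          have h1 := BWSaux.normTadjx_ge e β T hT m hm0 hmβ x
          have h2 : ‖(algebraMap ℂ (H →L[ℂ] H) (conj lam) - ContinuousLinearMap.adjoint T) x‖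
              = ‖(conj lam) • x - ContinuousLinearMap.adjoint T x‖ := by
            rw [ContinuousLinearMap.sub_apply, Algebra.algebraMap_eq_smul_one,
              ContinuousLinearMap.smul_apply, ContinuousLinearMap.one_apply]
          rw [h2]
          have h3 : ‖ContinuousLinearMap.adjoint T x‖ - ‖(conj lam) • x‖
              ≤ ‖(conj lam) • x - ContinuousLinearMap.adjoint T x‖ := by
            rw [norm_sub_rev]
            exact norm_sub_norm_le _ _
          rw [norm_smul, RCLike.norm_conj] at h3
          nlinarith [norm_nonneg x]
      rw [spectrum.mem_iff] at hlam
      exact hlam hunit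
    · have h1 := spectrum.norm_le_norm_mul_of_mem hlam
      have h2 : ‖(1 : H →L[ℂ] H)‖ ≤ 1 := by
        rw [ContinuousLinearMap.one_def]
        exact ContinuousLinearMap.norm_id_le
      nlinarith [norm_nonneg T, norm_nonneg (1 : H →L[ℂ] H)]
  have hsup : {lam : ℂ | m ≤ ‖lam‖ ∧ ‖lam‖ ≤ M} ⊆ spectrum ℂ T := by
    rintro lam ⟨hl1, hl2⟩
    rcases eq_or_lt_of_le hl2 with hM' | hM'
    · exact BWSaux.memB e β T hT M hM0 hβM hM lam hM'
    rcases eq_or_lt_of_le hl1 with hm' | hm'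
    · rcases eq_or_lt_of_le hm0 with hm0' | hm0'
      · -- m = 0 and ‖lam‖ = 0
        have hlam0 : lam = 0 := by
          have : ‖lam‖ = 0 := by rw [← hm', ← hm0']
          exact norm_eq_zero.mp this
        subst hlam0
        apply BWSaux.approx_mem_spectrum
        intro ε hε
        have h0m : m < ε := by rw [← hm0']; exact hε
        obtain ⟨a, ha⟩ := Filter.eventually_atBot.mp (hm.eventually (eventually_lt_nhds h0m))
        refine ⟨e a, ?_, ?_⟩
        · have : ‖e a‖ = 1 := e.orthonormal.1 a
          intro hcon
          rw [hcon, norm_zero] at this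
          norm_num at this
        · rw [zero_smul, sub_zero, hT, norm_smul]
          have h1 : ‖e (a+1)‖ = 1 := e.orthonormal.1 _
          have h2 : ‖e a‖ = 1 := e.orthonormal.1 _
          rw [h1, h2]
          have := ha a le_rfl
          linarith
      · exact BWSaux.memC e β T hT hnz m hm0' hmβ hm lam hm'.symm
    · exact BWSaux.memA e β T hT hnz m M hm0 hmβ hβM hmono' hM hm lam hm' hM'
  have hspecT : spectrum ℂ T = {lam : ℂ | m ≤ ‖lam‖ ∧ ‖lam‖ ≤ M} :=
    Set.Subset.antisymm hsub hsup
  refine ⟨hspecT, ?_⟩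
  ext lam
  have h := BWSaux.mem_spectrum_adjoint_iff T (conj lam)
  rw [Complex.conj_conj] at h
  rw [Set.mem_setOf_eq, h, hspecT]
  simp [Set.mem_setOf_eq, RCLike.norm_conj]
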